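/- The map ρ_{M|N} : Y_{M|N}(s) → Y_{N|M}(s†) sending t_{ij}(u) to t_{M+N+1-i, M+N+1-j}(-u) is an isomorphism of superalgebras, where s† is obtained from s by interchanging 0's and 1's and then reversing. -/

import Mathlib

noncomputable section

namespace SuperYangian

/-- The sign `(-1)^x` for `x : ZMod 2`. -/
def sgn (x : ZMod 2) : ℂ := if x = 0 then 1 else -1

/-- The element of the free algebra representing `t_{ij}^{(r)}`; the free generator
`(i, j, r)` stands for `t_{ij}^{(r+1)}`, and `t_{ij}^{(0)} = δ_{ij}`. -/
def tF (d : ℕ) (i j : Fin d) : ℕ → FreeAlgebra ℂ (Fin d × Fin d × ℕ)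
  | 0 => if i = j then 1 else 0
  | r + 1 => FreeAlgebra.ι ℂ (i, j, r)

/-- The RTT relations of the super Yangian `Y(gl_{M|N})` with parity sequence `p`. -/
inductive YRel (d : ℕ) (p : Fin d → ZMod 2) :
    FreeAlgebra ℂ (Fin d × Fin d × ℕ) → FreeAlgebra ℂ (Fin d × Fin d × ℕ) → Prop
  | rtt (i j h k : Fin d) (r s : ℕ) :
      YRel d p
        (tF d i j r * tF d h k s -
          sgn ((p i + p j) * (p h + p k)) • (tF d h k s * tF d i j r))
        (sgn (p i * p j + p i * p h + p j * p h) •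
          ∑ g ∈ Finset.range (min r s),
            (tF d h j g * tF d i k (r + s - 1 - g) -
             tF d h j (r + s - 1 - g) * tF d i k g))

/-- The super Yangian `Y(gl_{M|N})`, where `d = M + N` and `p` is the (arbitrary)
`0^M1^N`-sequence giving the parities of the indices. -/
abbrev Y (d : ℕ) (p : Fin d → ZMod 2) := RingQuot (YRel d p)

/-- The RTT generator `t_{ij}^{(r)}` of the super Yangian. -/
def tY (d : ℕ) (p : Fin d → ZMod 2) (i j : Fin d) (r : ℕ) : Y d p :=
  RingQuot.mkAlgHom ℂ (YRel d p) (tF d i j r)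

/-! ### Auxiliary lemmas -/

lemma zmod_add_aux : ∀ a b : ZMod 2, (1 + a) + (1 + b) = a + b := by decide

lemma zmod_B_aux : ∀ a b c : ZMod 2,
    (1 + a) * (1 + b) + (1 + a) * (1 + c) + (1 + b) * (1 + c)
      = 1 + (a * b + a * c + b * c) := by decide

lemma zmod_self_aux : ∀ a : ZMod 2, a = 1 + (1 + a) := by decide

lemma sgn_one_add (x : ZMod 2) : sgn (1 + x) = - sgn x := by
  fin_cases x
  · show (if (1:ZMod 2) + 0 = 0 then (1:ℂ) else -1) = -(if (0:ZMod 2) = 0 then (1:ℂ) else -1)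
    rw [if_neg (by decide), if_pos (by decide)]
  · show (if (1:ZMod 2) + 1 = 0 then (1:ℂ) else -1) = -(if (1:ZMod 2) = 0 then (1:ℂ) else -1)
    rw [if_pos (by decide), if_neg (by decide)]
    norm_num

variable {d : ℕ}

lemma mk_tF (q : Fin d → ZMod 2) (i j : Fin d) (r : ℕ) :
    RingQuot.mkAlgHom ℂ (YRel d q) (tF d i j r) = tY d q i j r := rfl

/-- The lift of the map `ρ` to the free algebra. -/
def liftF (q : Fin d → ZMod 2) : FreeAlgebra ℂ (Fin d × Fin d × ℕ) →ₐ[ℂ] Y d q :=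
  FreeAlgebra.lift ℂ (fun x => ((-1 : ℂ)) ^ (x.2.2 + 1) • tY d q x.1.rev x.2.1.rev (x.2.2 + 1))

lemma liftF_tF (q : Fin d → ZMod 2) (i j : Fin d) (r : ℕ) :
    liftF q (tF d i j r) = ((-1 : ℂ)) ^ r • tY d q i.rev j.rev r := by
  cases r with
  | zero =>
      by_cases h : i = j
      · subst h
        simp [tF, tY, liftF]
      · have h' : i.rev ≠ j.rev := fun hh => h (Fin.rev_injective hh)
        simp [tF, tY, h, h', liftF]
  | succ r =>
      simp [tF, tY, liftF]

lemma liftF_rel (p q : Fin d → ZMod 2) (hq : ∀ x : Fin d, q x.rev = 1 + p x)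
    {a b : FreeAlgebra ℂ (Fin d × Fin d × ℕ)} (hab : YRel d p a b) :
    liftF q a = liftF q b := by
  induction hab with
  | rtt i j l k r s =>
    have key := RingQuot.mkAlgHom_rel ℂ
      (YRel.rtt (d := d) (p := q) i.rev j.rev l.rev k.rev r s)
    simp only [map_sub, map_mul, map_smul, map_sum, mk_tF, hq, zmod_add_aux, zmod_B_aux,
      sgn_one_add] at key
    simp only [map_sub, map_mul, map_smul, map_sum, liftF_tF, smul_mul_smul_comm]
    rcases Nat.eq_zero_or_pos (r ⊓ s) with hmin | hmin
    · rw [hmin] at key ⊢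
      simp only [Finset.range_zero, Finset.sum_empty, smul_zero, sub_eq_zero] at key ⊢
      rw [key, smul_smul, smul_smul]
      congr 1
      ring
    · have hsum : (∑ x ∈ Finset.range (r ⊓ s),
          (((-1:ℂ) ^ x * (-1:ℂ) ^ (r + s - 1 - x)) •
              (tY d q l.rev j.rev x * tY d q i.rev k.rev (r + s - 1 - x)) -
           ((-1:ℂ) ^ (r + s - 1 - x) * (-1:ℂ) ^ x) •
              (tY d q l.rev j.rev (r + s - 1 - x) * tY d q i.rev k.rev x)))
          = (-1:ℂ) ^ (r + s - 1) • ∑ x ∈ Finset.range (r ⊓ s),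
              (tY d q l.rev j.rev x * tY d q i.rev k.rev (r + s - 1 - x) -
               tY d q l.rev j.rev (r + s - 1 - x) * tY d q i.rev k.rev x) := by
        rw [Finset.smul_sum]
        refine Finset.sum_congr rfl fun g hg => ?_
        have hg' : g ≤ r + s - 1 := by
          have := Finset.mem_range.mp hg
          omega
        rw [smul_sub, ← pow_add, ← pow_add,
          show g + (r + s - 1 - g) = r + s - 1 by omega,
          show r + s - 1 - g + g = r + s - 1 by omega]
      rw [hsum]
      have hpow : ((-1:ℂ)) ^ r * (-1:ℂ) ^ s = -((-1:ℂ) ^ (r + s - 1)) := by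
        obtain ⟨m, hm⟩ : ∃ m, r + s = m + 1 := ⟨r + s - 1, by omega⟩
        rw [← pow_add, hm, pow_succ, Nat.add_sub_cancel]
        ring
      rw [sub_eq_iff_eq_add] at key
      rw [key, mul_comm ((-1:ℂ) ^ s) ((-1:ℂ) ^ r), hpow]
      match_scalars <;> ring

/-- The superalgebra homomorphism `ρ`. -/
def rho (p q : Fin d → ZMod 2) (hq : ∀ x : Fin d, q x.rev = 1 + p x) :
    Y d p →ₐ[ℂ] Y d q :=
  RingQuot.liftAlgHom ℂ ⟨liftF q, fun _ _ h => liftF_rel p q hq h⟩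

lemma rho_tY (p q : Fin d → ZMod 2) (hq : ∀ x : Fin d, q x.rev = 1 + p x)
    (i j : Fin d) (r : ℕ) :
    rho p q hq (tY d p i j r) = ((-1 : ℂ)) ^ r • tY d q i.rev j.rev r := by
  rw [tY, rho, RingQuot.liftAlgHom_mkAlgHom_apply, liftF_tF]

lemma y_ext {p : Fin d → ZMod 2} {B : Type} [Semiring B] [Algebra ℂ B]
    {f g : Y d p →ₐ[ℂ] B}
    (h : ∀ (i j : Fin d) (r : ℕ), f (tY d p i j (r + 1)) = g (tY d p i j (r + 1))) :
    f = g := by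
  refine RingQuot.ringQuot_ext' ℂ _ _ (FreeAlgebra.hom_ext ?_)
  funext x
  obtain ⟨i, j, r⟩ := x
  have := h i j r
  simpa [tY, tF] using this

theorem statement2 (d : ℕ) (p : Fin d → ZMod 2) :
    ∃ ρ : Y d p ≃ₐ[ℂ] Y d (fun i => 1 + p i.rev),
      ∀ (i j : Fin d) (r : ℕ),
        ρ (tY d p i j r) =
          ((-1 : ℂ)) ^ r • tY d (fun i => 1 + p i.rev) i.rev j.rev r := by
  set q : Fin d → ZMod 2 := fun i => 1 + p i.rev with hqdef
  have hq1 : ∀ x : Fin d, q x.rev = 1 + p x := by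
    intro x
    simp [hqdef, Fin.rev_rev]
  have hq2 : ∀ x : Fin d, p x.rev = 1 + q x := by
    intro x
    simp only [hqdef]
    exact zmod_self_aux _
  refine ⟨AlgEquiv.ofAlgHom (rho p q hq1) (rho q p hq2) ?_ ?_, ?_⟩
  · apply y_ext
    intro i j r
    simp only [AlgHom.coe_comp, Function.comp_apply, AlgHom.coe_id, id_eq,
      rho_tY, map_smul, Fin.rev_rev, smul_smul, ← mul_pow]
    norm_num
  · apply y_ext
    intro i j r
    simp only [AlgHom.coe_comp, Function.comp_apply, AlgHom.coe_id, id_eq,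
      rho_tY, map_smul, Fin.rev_rev, smul_smul, ← mul_pow]
    norm_num
  · intro i j r
    exact rho_tY p q hq1 i j r

end SuperYangian
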